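/- Let κ : S¹ → (0, ∞) be C¹, let κ* ∈ ℝ, and suppose the open set V = {θ : κ(θ) > κ*} is a disjoint union of open intervals each of length at most π. Then ∫₀^{2π}(−κ'(θ)² + κ(θ)²) dθ ≤ 2κ* ∫₀^{2π} κ(θ) dθ. -/

import Mathlib

open Real MeasureTheory intervalIntegral

section helpers


lemma wirt_step (F : ℝ → ℝ) (hF : ContDiff ℝ 1 F) {a b : ℝ} (hab : a < b)
    (hlen : b - a ≤ π) (ha : F a = 0) (hb : F b = 0) {l : ℝ} (hl0 : 0 < l) (hl1 : l < 1) :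
    l ^ 2 * ∫ x in a..b, (F x) ^ 2 ≤ ∫ x in a..b, (deriv F x) ^ 2 := by
  set m : ℝ := (a + b) / 2 with hm
  set c : ℝ → ℝ := fun x => Real.cos (l * (x - m)) with hc
  set s : ℝ → ℝ := fun x => Real.sin (l * (x - m)) with hs
  have hFc : Continuous F := hF.continuous
  have hF' : Continuous (deriv F) := hF.continuous_deriv le_rfl
  have hFd : ∀ x : ℝ, HasDerivAt F (deriv F x) x := fun x =>
    ((hF.differentiable one_ne_zero) x).hasDerivAt
  have hcpos : ∀ x ∈ Set.uIcc a b, 0 < c x := by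
    intro x hx
    rw [Set.uIcc_of_le hab.le] at hx
    apply Real.cos_pos_of_mem_Ioo
    constructor
    · have : l * (x - m) ≥ -(l * ((b - a) / 2)) := by nlinarith [hx.1, hx.2]
      have h2 : l * ((b - a) / 2) < π / 2 := by nlinarith [Real.pi_pos]
      linarith
    · have : l * (x - m) ≤ l * ((b - a) / 2) := by nlinarith [hx.1, hx.2]
      nlinarith [Real.pi_pos]
  -- derivative of the inner linear map
  have hlin : ∀ x : ℝ, HasDerivAt (fun x => l * (x - m)) l x := by
    intro x
    simpa using ((hasDerivAt_id x).sub_const m).const_mul l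
  have hcd : ∀ x : ℝ, HasDerivAt c (-s x * l) x := fun x => (hlin x).cos
  have hsd : ∀ x : ℝ, HasDerivAt s (c x * l) x := fun x => (hlin x).sin
  set D : ℝ → ℝ := fun x =>
    -l * (2 * F x * deriv F x * (s x / c x) + (F x) ^ 2 * (l / (c x) ^ 2)) with hD
  have hφd : ∀ x ∈ Set.uIcc a b, HasDerivAt (fun x => -l * ((F x) ^ 2 * (s x / c x))) (D x) x := by
    intro x hx
    have hcx := (hcpos x hx).ne'
    have h1 : HasDerivAt (fun x => (F x) ^ 2) (2 * F x * deriv F x) x := by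
      simpa [mul_comm, mul_assoc, mul_left_comm] using (hFd x).fun_pow 2
    have h2 : HasDerivAt (fun x => s x / c x)
        ((c x * l * c x - s x * (-s x * l)) / (c x) ^ 2) x := (hsd x).div (hcd x) hcx
    have hsc : s x ^ 2 + c x ^ 2 = 1 := Real.sin_sq_add_cos_sq (l * (x - m))
    have e0 : (c x * l * c x - s x * (-s x * l)) / (c x) ^ 2 = l / (c x) ^ 2 := by
      congr 1
      linear_combination l * hsc
    have := (h1.mul h2).const_mul (-l)
    rw [e0] at this
    exact this
  have hDcont : ContinuousOn D (Set.uIcc a b) := by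
    apply ContinuousOn.mul continuousOn_const
    apply ContinuousOn.add
    · exact (((continuousOn_const.mul hFc.continuousOn).mul hF'.continuousOn).mul
        ((Real.continuous_sin.comp (by fun_prop)).continuousOn.div
          ((Real.continuous_cos.comp (by fun_prop)).continuousOn)
          (fun x hx => (hcpos x hx).ne')))
    · exact ((hFc.pow 2).continuousOn).mul
        (continuousOn_const.div
          (((Real.continuous_cos.comp (by fun_prop)).pow 2).continuousOn)
          (fun x hx => pow_ne_zero 2 (hcpos x hx).ne'))
  have hDint : IntervalIntegrable D volume a b := hDcont.intervalIntegrable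
  have hftc : ∫ x in a..b, D x = 0 := by
    rw [integral_eq_sub_of_hasDerivAt hφd hDint, ha, hb]
    ring
  have hkey : 0 ≤ ∫ x in a..b, ((deriv F x) ^ 2 - l ^ 2 * (F x) ^ 2 - D x) := by
    apply intervalIntegral.integral_nonneg hab.le
    intro x hx
    have hx' : x ∈ Set.uIcc a b := by rwa [Set.uIcc_of_le hab.le]
    have hcx := (hcpos x hx').ne'
    have hsc : s x ^ 2 + c x ^ 2 = 1 := Real.sin_sq_add_cos_sq (l * (x - m))
    have e1 : l / (c x) ^ 2 = l + l * (s x / c x) ^ 2 := by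
      field_simp
      linear_combination (-1) * hsc
    have hgoal : (deriv F x) ^ 2 - l ^ 2 * (F x) ^ 2 - D x
        = (deriv F x + l * F x * (s x / c x)) ^ 2 := by
      simp only [hD]
      rw [e1]
      ring
    rw [hgoal]
    positivity
  have hFint : IntervalIntegrable (fun x => (F x) ^ 2) volume a b :=
    ((hFc.pow 2).intervalIntegrable a b)
  have hF'int : IntervalIntegrable (fun x => (deriv F x) ^ 2) volume a b :=
    ((hF'.pow 2).intervalIntegrable a b)
  have hsplit : ∫ x in a..b, ((deriv F x) ^ 2 - l ^ 2 * (F x) ^ 2 - D x)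
      = (∫ x in a..b, (deriv F x) ^ 2) - l ^ 2 * (∫ x in a..b, (F x) ^ 2)
        - ∫ x in a..b, D x := by
    rw [intervalIntegral.integral_sub (hF'int.sub (hFint.const_mul _)) hDint,
      intervalIntegral.integral_sub hF'int (hFint.const_mul _),
      intervalIntegral.integral_const_mul]
  rw [hsplit, hftc] at hkey
  linarith

lemma wirtinger (F : ℝ → ℝ) (hF : ContDiff ℝ 1 F) {a b : ℝ} (hab : a < b)
    (hlen : b - a ≤ π) (ha : F a = 0) (hb : F b = 0) :
    ∫ x in a..b, (F x) ^ 2 ≤ ∫ x in a..b, (deriv F x) ^ 2 := by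
  set A := ∫ x in a..b, (F x) ^ 2 with hA
  set B := ∫ x in a..b, (deriv F x) ^ 2 with hB
  by_contra h
  push_neg at h
  have hB0 : 0 ≤ B := intervalIntegral.integral_nonneg hab.le (fun x _ => sq_nonneg _)
  have hA0 : 0 < A := lt_of_le_of_lt hB0 h
  set l : ℝ := Real.sqrt ((A + B) / (2 * A)) with hl
  have hfrac : (A + B) / (2 * A) < 1 := by
    rw [div_lt_one (by linarith)]
    linarith
  have hfrac0 : 0 < (A + B) / (2 * A) := by positivity
  have hl0 : 0 < l := Real.sqrt_pos.mpr hfrac0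
  have hl1 : l < 1 := by
    rw [hl, show (1:ℝ) = Real.sqrt 1 by simp]
    exact Real.sqrt_lt_sqrt hfrac0.le hfrac
  have hl2 : l ^ 2 = (A + B) / (2 * A) := Real.sq_sqrt hfrac0.le
  have := wirt_step F hF hab hlen ha hb hl0 hl1
  rw [hl2] at this
  have : (A + B) / 2 ≤ B := by
    rw [div_mul_eq_mul_div, mul_comm] at this
    calc (A + B) / 2 = A * ((A+B)/(2*A)) := by field_simp
      _ ≤ B := by rw [mul_comm] at this ⊢; exact le_trans (le_of_eq (by ring)) this
  linarith



lemma comp_struct {U : Set ℝ} (hU : IsOpen U) {x t u : ℝ} (hx : x ∈ U)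
    (hsub : U ⊆ Set.Ioo t u) :
    ∃ a b : ℝ, a < b ∧ connectedComponentIn U x = Set.Ioo a b ∧ t ≤ a ∧ b ≤ u := by
  set K := connectedComponentIn U x with hK
  have hKne : K.Nonempty := ⟨x, mem_connectedComponentIn hx⟩
  have hKU : K ⊆ U := connectedComponentIn_subset U x
  have hKI : K ⊆ Set.Ioo t u := hKU.trans hsub
  have hbdd : BddBelow K := BddBelow.mono hKI bddBelow_Ioo
  have hbdd' : BddAbove K := BddAbove.mono hKI bddAbove_Ioo
  have hKo : IsOpen K := hU.connectedComponentIn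
  have hord : Set.OrdConnected K := (isPreconnected_connectedComponentIn).ordConnected
  set a := sInf K with ha
  set b := sSup K with hb
  have hlt : ∀ y ∈ K, a < y ∧ y < b := by
    intro y hy
    obtain ⟨ε, hε, hball⟩ := Metric.isOpen_iff.mp hKo y hy
    rw [Real.ball_eq_Ioo] at hball
    constructor
    · have h1 : y - ε / 2 ∈ K := hball ⟨by linarith, by linarith⟩
      have := csInf_le hbdd h1
      linarith
    · have h1 : y + ε / 2 ∈ K := hball ⟨by linarith, by linarith⟩
      have := le_csSup hbdd' h1
      linarith
  refine ⟨a, b, (hlt x (mem_connectedComponentIn hx)).1.trans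
      (hlt x (mem_connectedComponentIn hx)).2, ?_, ?_, ?_⟩
  · apply Set.Subset.antisymm
    · exact fun y hy => ⟨(hlt y hy).1, (hlt y hy).2⟩
    · intro y hy
      obtain ⟨z, hz, hzy⟩ := exists_lt_of_csInf_lt hKne hy.1
      obtain ⟨w, hw, hyw⟩ := exists_lt_of_lt_csSup hKne hy.2
      exact hord.out hz hw ⟨hzy.le, hyw.le⟩
  · exact le_csInf hKne (fun y hy => (hKI hy).1.le)
  · exact csSup_le hKne (fun y hy => (hKI hy).2.le)

end helpers

theorem stmt_11 (κ : ℝ → ℝ) (κstar : ℝ)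
    (hκ : ContDiff ℝ 1 κ) (hper : Function.Periodic κ (2 * π))
    (hpos : ∀ θ, 0 < κ θ)
    (hcomp : ∀ a b : ℝ, Set.Ioo a b ⊆ {θ | κstar < κ θ} → b - a ≤ π) :
    ∫ θ in (0:ℝ)..(2 * π), (-(deriv κ θ) ^ 2 + κ θ ^ 2) ≤
      2 * κstar * ∫ θ in (0:ℝ)..(2 * π), κ θ := by
  have hπ := Real.pi_pos
  have hκc : Continuous κ := hκ.continuous
  have hκ' : Continuous (deriv κ) := hκ.continuous_deriv le_rfl
  obtain ⟨t, ht⟩ : ∃ t, κ t ≤ κstar := by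
    by_contra h
    push_neg at h
    have h4 := hcomp 0 4 (fun x _ => h x)
    nlinarith [Real.pi_lt_d2]
  have hκstar : 0 < κstar := lt_of_lt_of_le (hpos t) ht
  set G : ℝ → ℝ := fun θ => -(deriv κ θ) ^ 2 + κ θ ^ 2 - 2 * κstar * κ θ with hGdef
  have hGc : Continuous G :=
    (((hκ'.pow 2).neg.add (hκc.pow 2)).sub (continuous_const.mul hκc))
  have hderper : Function.Periodic (deriv κ) (2 * π) := by
    intro θ
    have h1 : deriv (fun x => κ (x + 2 * π)) θ = deriv κ (θ + 2 * π) := deriv_comp_add_const κ (2 * π) θ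
    have h2 : (fun x => κ (x + 2 * π)) = κ := funext (fun x => hper x)
    rw [h2] at h1
    exact h1.symm
  have hGper : Function.Periodic G (2 * π) := by
    intro θ
    simp only [hGdef, hderper θ, hper θ]
  have key : ∫ θ in (0:ℝ)..(2 * π), G θ ≤ 0 := by
    have hshift : ∫ θ in (0:ℝ)..(2 * π), G θ = ∫ θ in t..(t + 2 * π), G θ := by
      have h0 := hGper.intervalIntegral_add_eq 0 t
      simpa using h0
    rw [hshift, intervalIntegral.integral_of_le (by linarith : t ≤ t + 2 * π),
      MeasureTheory.integral_Ioc_eq_integral_Ioo]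
    set V : Set ℝ := {θ | κstar < κ θ} with hV
    have hVo : IsOpen V := isOpen_lt continuous_const hκc
    set U : Set ℝ := V ∩ Set.Ioo t (t + 2 * π) with hU
    have hUo : IsOpen U := hVo.inter isOpen_Ioo
    have hUsub : U ⊆ Set.Ioo t (t + 2 * π) := Set.inter_subset_right
    have hGint : IntegrableOn G (Set.Ioo t (t + 2 * π)) volume :=
      (hGc.continuousOn.integrableOn_compact isCompact_Icc).mono_set Set.Ioo_subset_Icc_self
    have hdecomp : Set.Ioo t (t + 2 * π) = U ∪ (Set.Ioo t (t + 2 * π) \ U) :=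
      (Set.union_diff_cancel hUsub).symm
    have e : ∫ θ in Set.Ioo t (t + 2 * π), G θ
        = (∫ θ in U, G θ) + ∫ θ in (Set.Ioo t (t + 2 * π) \ U), G θ := by
      conv_lhs => rw [hdecomp]
      exact MeasureTheory.setIntegral_union Set.disjoint_sdiff_right
        (measurableSet_Ioo.diff hUo.measurableSet) (hGint.mono_set hUsub)
        (hGint.mono_set Set.diff_subset)
    rw [e]
    have part1 : ∫ θ in (Set.Ioo t (t + 2 * π) \ U), G θ ≤ 0 := by
      apply MeasureTheory.setIntegral_nonpos (measurableSet_Ioo.diff hUo.measurableSet)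
      rintro y ⟨hy1, hy2⟩
      have hyV : ¬ κstar < κ y := fun hc => hy2 ⟨hc, hy1⟩
      push_neg at hyV
      simp only [hGdef]
      nlinarith [sq_nonneg (deriv κ y), hpos y]
    have part2 : ∫ θ in U, G θ ≤ 0 := by
      set 𝒞 : Set (Set ℝ) := (fun x => connectedComponentIn U x) '' U with h𝒞
      have hcnt : 𝒞.Countable := by
        have hsur : 𝒞 ⊆ Set.range
            (fun q : {q : ℚ // (q : ℝ) ∈ U} => connectedComponentIn U (q : ℝ)) := by
          rintro s ⟨x, hxU, rfl⟩
          obtain ⟨a, b, hab, hIoo, -, -⟩ := comp_struct hUo hxU hUsub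
          obtain ⟨q, hq1, hq2⟩ := exists_rat_btwn hab
          have hqK : (q : ℝ) ∈ connectedComponentIn U x := by
            rw [hIoo]; exact ⟨hq1, hq2⟩
          have hqU : (q : ℝ) ∈ U := connectedComponentIn_subset U x hqK
          exact ⟨⟨q, hqU⟩, (connectedComponentIn_eq hqK).symm⟩
        exact Set.Countable.mono hsur (Set.countable_range _)
      haveI := hcnt.to_subtype
      have hcov : (⋃ c : 𝒞, (c : Set ℝ)) = U := by
        apply Set.Subset.antisymm
        · rintro y hy
          simp only [Set.mem_iUnion] at hy
          obtain ⟨⟨c, hc⟩, hyc⟩ := hy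
          obtain ⟨x, hxU, rfl⟩ := hc
          exact connectedComponentIn_subset U x hyc
        · intro y hy
          exact Set.mem_iUnion.mpr
            ⟨⟨connectedComponentIn U y, ⟨y, hy, rfl⟩⟩, mem_connectedComponentIn hy⟩
      have hmeas : ∀ c : 𝒞, MeasurableSet (c : Set ℝ) := by
        rintro ⟨c, x, hxU, rfl⟩
        exact hUo.connectedComponentIn.measurableSet
      have hdisj : Pairwise (Function.onFun Disjoint (fun c : 𝒞 => (c : Set ℝ))) := by
        rintro ⟨c, x, hxU, rfl⟩ ⟨c', x', hxU', rfl⟩ hne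
        refine Set.disjoint_left.mpr (fun z hz hz' => hne ?_)
        apply Subtype.ext
        simp only
        rw [connectedComponentIn_eq hz, connectedComponentIn_eq hz']
      have hGU : IntegrableOn G (⋃ c : 𝒞, (c : Set ℝ)) volume := by
        rw [hcov]; exact hGint.mono_set hUsub
      have hEq : ∫ θ in U, G θ = ∑' c : 𝒞, ∫ θ in (c : Set ℝ), G θ := by
        rw [← hcov]
        exact MeasureTheory.integral_iUnion hmeas hdisj hGU
      rw [hEq]
      apply tsum_nonpos
      rintro ⟨c, x, hxU, rfl⟩
      show ∫ θ in connectedComponentIn U x, G θ ≤ 0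
      obtain ⟨a, b, hab, hIoo, hta, hb2π⟩ := comp_struct hUo hxU hUsub
      rw [hIoo]
      have hIooU : Set.Ioo a b ⊆ U := by
        rw [← hIoo]; exact connectedComponentIn_subset U x
      have hIooV : Set.Ioo a b ⊆ V := hIooU.trans Set.inter_subset_left
      have hlen : b - a ≤ π := hcomp a b hIooV
      have hclosed : Set.Icc a b ⊆ {y | κstar ≤ κ y} := by
        have hcl : IsClosed {y | κstar ≤ κ y} := isClosed_le continuous_const hκc
        rw [← closure_Ioo hab.ne]
        exact hcl.closure_subset_iff.mpr (fun y hy => show κstar ≤ κ y from le_of_lt (hIooV hy))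
      have hxab : x ∈ Set.Ioo a b := by
        rw [← hIoo]; exact mem_connectedComponentIn hxU
      have hka : κ a = κstar := by
        refine le_antisymm ?_ (hclosed ⟨le_refl a, hab.le⟩)
        by_contra hcon
        push_neg at hcon
        have hat : t ≠ a := by
          intro h; rw [← h] at hcon; exact absurd ht (not_le.mpr hcon)
        have haU : a ∈ U := ⟨hcon, lt_of_le_of_ne hta hat, by linarith⟩
        obtain ⟨ε, hε, hball⟩ := Metric.isOpen_iff.mp hUo a haU
        rw [Real.ball_eq_Ioo] at hball
        have hKsub : Set.Ioo (a - ε) b ⊆ U := by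
          intro y hy
          rcases lt_or_ge y (a + ε) with h | h
          · exact hball ⟨hy.1, h⟩
          · exact hIooU ⟨by linarith, hy.2⟩
        have hxK : x ∈ Set.Ioo (a - ε) b := ⟨by linarith [hxab.1], hxab.2⟩
        have hsub2 : Set.Ioo (a - ε) b ⊆ connectedComponentIn U x :=
          isPreconnected_Ioo.subset_connectedComponentIn hxK hKsub
        have hmem : a - ε / 2 ∈ Set.Ioo a b := by
          rw [← hIoo]
          exact hsub2 ⟨by linarith, by linarith⟩
        linarith [hmem.1]
      have hkb : κ b = κstar := by
        refine le_antisymm ?_ (hclosed ⟨hab.le, le_refl b⟩)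
        by_contra hcon
        push_neg at hcon
        have hbt : b ≠ t + 2 * π := by
          intro h
          rw [h] at hcon
          have h2 : κ (t + 2 * π) = κ t := hper t
          linarith
        have hbU : b ∈ U := ⟨hcon, by linarith, lt_of_le_of_ne hb2π hbt⟩
        obtain ⟨ε, hε, hball⟩ := Metric.isOpen_iff.mp hUo b hbU
        rw [Real.ball_eq_Ioo] at hball
        have hKsub : Set.Ioo a (b + ε) ⊆ U := by
          intro y hy
          rcases lt_or_ge (b - ε) y with h | h
          · exact hball ⟨h, hy.2⟩
          · exact hIooU ⟨hy.1, by linarith⟩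
        have hxK : x ∈ Set.Ioo a (b + ε) := ⟨hxab.1, by linarith [hxab.2]⟩
        have hsub2 : Set.Ioo a (b + ε) ⊆ connectedComponentIn U x :=
          isPreconnected_Ioo.subset_connectedComponentIn hxK hKsub
        have hmem : b + ε / 2 ∈ Set.Ioo a b := by
          rw [← hIoo]
          exact hsub2 ⟨by linarith, by linarith⟩
        linarith [hmem.2]
      set F : ℝ → ℝ := fun y => κ y - κstar with hF
      have hFcd : ContDiff ℝ 1 F := hκ.sub contDiff_const
      have hFa : F a = 0 := by simp [hF, hka]
      have hFb : F b = 0 := by simp [hF, hkb]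
      have hFderiv : deriv F = deriv κ := funext (fun y => deriv_sub_const κstar)
      have hW := wirtinger F hFcd hab hlen hFa hFb
      have hGeq : ∀ y, G y = (F y) ^ 2 - (deriv F y) ^ 2 - κstar ^ 2 := by
        intro y
        rw [hFderiv]
        simp only [hGdef, hF]
        ring
      have h1 : ∫ θ in Set.Ioo a b, G θ = ∫ θ in a..b, G θ := by
        rw [intervalIntegral.integral_of_le hab.le,
          MeasureTheory.integral_Ioc_eq_integral_Ioo]
      rw [h1]
      have hFc : Continuous F := hFcd.continuous
      have hicF : IntervalIntegrable (fun y => (F y) ^ 2) volume a b :=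
        (hFc.pow 2).intervalIntegrable a b
      have hicF' : IntervalIntegrable (fun y => (deriv F y) ^ 2) volume a b := by
        rw [hFderiv]
        exact (hκ'.pow 2).intervalIntegrable a b
      have h2 : ∫ θ in a..b, G θ = (∫ θ in a..b, (F θ) ^ 2)
          - (∫ θ in a..b, (deriv F θ) ^ 2) - (b - a) * κstar ^ 2 := by
        rw [intervalIntegral.integral_congr
          (g := fun y => (F y) ^ 2 - (deriv F y) ^ 2 - κstar ^ 2) (fun y _ => hGeq y)]
        rw [intervalIntegral.integral_sub (hicF.sub hicF') intervalIntegrable_const,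
          intervalIntegral.integral_sub hicF hicF', intervalIntegral.integral_const]
        simp [smul_eq_mul]
      rw [h2]
      nlinarith [hW, sq_nonneg κstar]
    linarith
  have hint1 : IntervalIntegrable (fun θ => -(deriv κ θ) ^ 2 + κ θ ^ 2) volume 0 (2 * π) :=
    ((hκ'.pow 2).neg.add (hκc.pow 2)).intervalIntegrable 0 (2 * π)
  have hint2 : IntervalIntegrable (fun θ => 2 * κstar * κ θ) volume 0 (2 * π) :=
    (continuous_const.mul hκc).intervalIntegrable 0 (2 * π)
  have hsplit : ∫ θ in (0:ℝ)..(2 * π), G θ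
      = (∫ θ in (0:ℝ)..(2 * π), (-(deriv κ θ) ^ 2 + κ θ ^ 2))
        - ∫ θ in (0:ℝ)..(2 * π), 2 * κstar * κ θ := by
    rw [← intervalIntegral.integral_sub hint1 hint2]
  have hconst : ∫ θ in (0:ℝ)..(2 * π), 2 * κstar * κ θ
      = 2 * κstar * ∫ θ in (0:ℝ)..(2 * π), κ θ :=
    intervalIntegral.integral_const_mul _ _
  rw [hsplit, hconst] at key
  linarith
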